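/- Let a₁,b₁,c₁,a₂,b₂,c₂ ∈ C and suppose (b₁-b₂)² ≠ 4(a₁-a₂)(c₁-c₂). Let z₁, z₂ be the two distinct roots of (a₁-a₂)z² + (b₁-b₂)z + (c₁-c₂) = 0. Define g_i = a_i z₁z₂ + (b_i/2)(z₁+z₂) + c_i for i = 1,2, and p = (a₁z₁² + b₁z₁ + c₁)(a₁z₂² + b₁z₂ + c₁). Then with D_i = b_i² - 4a_ic_i and J = 2(a₁c₂ + a₂c₁) - b₁b₂, and for any ζ ∈ C, the identity g₁² - 2g₁g₂ζ + g₂² - p(1-ζ²) = 0 is equivalent to (J(1+ζ) + D₁ + D₂)² = D₁D₂(1-ζ)², up to multiplication by a nonzero factor depending only on a₁-a₂, b₁-b₂, c₁-c₂. (In particular, the condition g₁² - 2g₁g₂cos θ + g₂² = p sin²θ can be rewritten purely in terms of the invariants D₁, D₂, J and cos θ.) -/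
import Mathlib

set_option maxHeartbeats 2000000 in
/-- With `z₁ ≠ z₂` the roots of `(a₁-a₂)z² + (b₁-b₂)z + (c₁-c₂) = 0`,
`gᵢ = aᵢz₁z₂ + (bᵢ/2)(z₁+z₂) + cᵢ`, `p = q₁(z₁)q₁(z₂)`, `Dᵢ = bᵢ² - 4aᵢcᵢ` and
`J = 2(a₁c₂+a₂c₁) - b₁b₂`, for every `ζ` the quantity
`g₁² - 2g₁g₂ζ + g₂² - p(1-ζ²)` equals
`(J(1+ζ) + D₁ + D₂)² - D₁D₂(1-ζ)²` up to the nonzero factor `1/(4(a₁-a₂)²)`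
depending only on the coefficient differences. -/
theorem stmt_18 (a₁ b₁ c₁ a₂ b₂ c₂ z₁ z₂ : ℂ)
    (ha : a₁ ≠ a₂)
    (hdisc : (b₁ - b₂) ^ 2 ≠ 4 * (a₁ - a₂) * (c₁ - c₂))
    (hne : z₁ ≠ z₂)
    (hz₁ : (a₁ - a₂) * z₁ ^ 2 + (b₁ - b₂) * z₁ + (c₁ - c₂) = 0)
    (hz₂ : (a₁ - a₂) * z₂ ^ 2 + (b₁ - b₂) * z₂ + (c₁ - c₂) = 0)
    (g₁ g₂ p D₁ D₂ J : ℂ)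
    (hg₁ : g₁ = a₁ * z₁ * z₂ + (b₁ / 2) * (z₁ + z₂) + c₁)
    (hg₂ : g₂ = a₂ * z₁ * z₂ + (b₂ / 2) * (z₁ + z₂) + c₂)
    (hp : p = (a₁ * z₁ ^ 2 + b₁ * z₁ + c₁) * (a₁ * z₂ ^ 2 + b₁ * z₂ + c₁))
    (hD₁ : D₁ = b₁ ^ 2 - 4 * a₁ * c₁) (hD₂ : D₂ = b₂ ^ 2 - 4 * a₂ * c₂)
    (hJ : J = 2 * (a₁ * c₂ + a₂ * c₁) - b₁ * b₂) :
    ∃ K : ℂ, K = 1 / (4 * (a₁ - a₂) ^ 2) ∧ K ≠ 0 ∧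
      ∀ ζ : ℂ, g₁ ^ 2 - 2 * g₁ * g₂ * ζ + g₂ ^ 2 - p * (1 - ζ ^ 2)
        = K * ((J * (1 + ζ) + D₁ + D₂) ^ 2 - D₁ * D₂ * (1 - ζ) ^ 2) := by
  have hA : a₁ - a₂ ≠ 0 := sub_ne_zero.mpr ha
  have hA4 : (4 : ℂ) * (a₁ - a₂) ^ 2 ≠ 0 := by
    exact mul_ne_zero (by norm_num) (pow_ne_zero _ hA)
  have hzz : z₁ - z₂ ≠ 0 := sub_ne_zero.mpr hne
  have key : (z₁ - z₂) * ((a₁ - a₂) * (z₁ + z₂) + (b₁ - b₂)) = 0 := by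
    linear_combination hz₁ - hz₂
  have hs : (a₁ - a₂) * (z₁ + z₂) + (b₁ - b₂) = 0 :=
    (mul_eq_zero.mp key).resolve_left hzz
  have hm : (a₁ - a₂) * (z₁ * z₂) - (c₁ - c₂) = 0 := by
    linear_combination z₁ * hs - hz₁
  refine ⟨1 / (4 * (a₁ - a₂) ^ 2), rfl, one_div_ne_zero hA4, fun ζ => ?_⟩
  subst hg₁ hg₂ hp hD₁ hD₂ hJ
  have main : 4 * (a₁ - a₂) ^ 2 *
      ((a₁ * z₁ * z₂ + (b₁ / 2) * (z₁ + z₂) + c₁) ^ 2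
        - 2 * (a₁ * z₁ * z₂ + (b₁ / 2) * (z₁ + z₂) + c₁)
            * (a₂ * z₁ * z₂ + (b₂ / 2) * (z₁ + z₂) + c₂) * ζ
        + (a₂ * z₁ * z₂ + (b₂ / 2) * (z₁ + z₂) + c₂) ^ 2
        - (a₁ * z₁ ^ 2 + b₁ * z₁ + c₁) * (a₁ * z₂ ^ 2 + b₁ * z₂ + c₁) * (1 - ζ ^ 2))
      = ((2 * (a₁ * c₂ + a₂ * c₁) - b₁ * b₂) * (1 + ζ)
          + (b₁ ^ 2 - 4 * a₁ * c₁) + (b₂ ^ 2 - 4 * a₂ * c₂)) ^ 2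
        - (b₁ ^ 2 - 4 * a₁ * c₁) * (b₂ ^ 2 - 4 * a₂ * c₂) * (1 - ζ) ^ 2 := by
    linear_combination (b₂^2*((a₁-a₂)*(z₁+z₂)) + b₂^3 + 4*a₂*b₂*((a₁-a₂)*(z₁*z₂)) + -4*a₂*b₂*c₂ + 4*c₁*a₂*b₂*ζ + -2*b₁*b₂*ζ*((a₁-a₂)*(z₁+z₂)) + -1*b₁*b₂^2 + -2*b₁*b₂^2*ζ + -4*b₁*a₂*ζ*((a₁-a₂)*(z₁*z₂)) + 4*b₁*a₂*c₂*ζ + -4*b₁*c₁*a₂*ζ^2 + b₁^2*((a₁-a₂)*(z₁+z₂)) + b₁^2*b₂ + 2*b₁^2*b₂*ζ + -1*b₁^3 + -4*a₁*b₂*ζ*((a₁-a₂)*(z₁*z₂)) + 4*a₁*b₂*c₂ + -4*a₁*c₁*((a₁-a₂)*(z₁+z₂)) + 4*a₁*c₁*ζ^2*((a₁-a₂)*(z₁+z₂)) + -4*a₁*c₁*b₂ + -4*a₁*c₁*b₂*ζ + 4*a₁*c₁*b₂*ζ^2 + 4*a₁*b₁*ζ^2*((a₁-a₂)*(z₁*z₂))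 + -4*a₁*b₁*c₂*ζ + 4*a₁*b₁*c₁) * hs + (4*a₂*b₂^2 + 4*a₂^2*((a₁-a₂)*(z₁*z₂)) + -12*a₂^2*c₂ + 4*c₁*a₂^2 + 8*c₁*a₂^2*ζ + -4*b₁*a₂*b₂ + -4*b₁*a₂*b₂*ζ + 4*b₁^2*a₂ + 4*b₁^2*a₂*ζ + -4*b₁^2*a₂*ζ^2 + -4*a₁*b₂^2*ζ + -8*a₁*a₂*ζ*((a₁-a₂)*(z₁*z₂)) + 8*a₁*a₂*c₂ + 16*a₁*a₂*c₂*ζ + -16*a₁*c₁*a₂ + -16*a₁*c₁*a₂*ζ + 8*a₁*c₁*a₂*ζ^2 + 4*a₁*b₁*b₂*ζ + 4*a₁*b₁*b₂*ζ^2 + -4*a₁*b₁^2 + 4*a₁^2*ζ^2*((a₁-a₂)*(z₁*z₂)) + -8*a₁^2*c₂*ζ + -4*a₁^2*c₂*ζ^2 + 16*a₁^2*c₁ + -4*a₁^2*c₁*ζ^2) * hm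
  rw [one_div_mul_eq_div, eq_div_iff hA4]
  linear_combination main
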